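/- Assume κ = κ̂ and 0 < λ < 1, and denote by F_C, F_V, G_C, G_V the partial derivatives of F and G at P₈ = (V₊, 1+V₊). Then G_V + G_C = m C₈ √Q > 0 and F_V + F_C = -((γ-1)/2)(G_V + G_C) < 0, where C₈ = 1+V₊; consequently F_V < -F_C < 0. -/

import Mathlib

noncomputable section

/-- `V_* = (κ - 2(λ-1))/(nγ)` -/
def Vstar (n γ lam κ : ℝ) : ℝ := (κ - 2*(lam - 1)) / (n*γ)

/-- `α = (κ(γ-1) + 2(λ-1))/(2γ)` -/
def alphaP (γ lam κ : ℝ) : ℝ := (κ*(γ - 1) + 2*(lam - 1)) / (2*γ)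

/-- `k₁ = 1 + (n-1)(γ-1)/2` -/
def K1 (n γ : ℝ) : ℝ := 1 + (n - 1)*(γ - 1)/2

/-- `k₂ = ((n-1)(γ-1) + (γ-3)(λ-1))/2` -/
def K2 (n γ lam : ℝ) : ℝ := ((n - 1)*(γ - 1) + (γ - 3)*(lam - 1)) / 2

/-- `k₃ = (γ-1)(λ-1)/2` -/
def K3 (γ lam : ℝ) : ℝ := (γ - 1)*(lam - 1)/2

/-- `G(V,C) = nC²(V - V_*) - V(1+V)(λ+V)` -/
def Gf (n γ lam κ V C : ℝ) : ℝ := n*C^2*(V - Vstar n γ lam κ) - V*(1+V)*(lam+V)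

/-- `F(V,C) = C[C²(1 + α/(1+V)) - k₁(1+V)² + k₂(1+V) - k₃]` -/
def Ff (n γ lam κ V C : ℝ) : ℝ :=
  C*(C^2*(1 + alphaP γ lam κ/(1+V)) - K1 n γ*(1+V)^2 + K2 n γ lam*(1+V) - K3 γ lam)

/-- The isentropic exponent `κ̂ = 2(1-λ)/(γ-1)`. -/
def khat (γ lam : ℝ) : ℝ := 2*(1 - lam)/(γ - 1)

/-- `a = ((γ-3)/(m(γ-1)))μ - 1`, with `m = n-1`, `μ = λ-1`. -/
def aIs (n γ lam : ℝ) : ℝ := ((γ - 3)/((n-1)*(γ - 1)))*(lam - 1) - 1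

/-- `Q = ((γ-3)/(m(γ-1)))²μ² - 2((γ+1)/(m(γ-1)))μ + 1`. -/
def QIs (n γ lam : ℝ) : ℝ :=
  ((γ - 3)/((n-1)*(γ - 1)))^2*(lam - 1)^2 - 2*((γ + 1)/((n-1)*(γ - 1)))*(lam - 1) + 1

/-- `V₊ = (a + √Q)/2` in the isentropic case `κ = κ̂`. -/
def VpIs (n γ lam : ℝ) : ℝ := (aIs n γ lam + Real.sqrt (QIs n γ lam))/2

/-- `V₋ = (a - √Q)/2` in the isentropic case `κ = κ̂`. -/
def VmIs (n γ lam : ℝ) : ℝ := (aIs n γ lam - Real.sqrt (QIs n γ lam))/2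

/-- `F_C`: the partial derivative `∂F/∂C` at `P₈ = (V₊, 1+V₊)`, with `κ = κ̂`. -/
def FCd (n γ lam : ℝ) : ℝ :=
  deriv (fun C => Ff n γ lam (khat γ lam) (VpIs n γ lam) C) (1 + VpIs n γ lam)

/-- `F_V`: the partial derivative `∂F/∂V` at `P₈ = (V₊, 1+V₊)`, with `κ = κ̂`. -/
def FVd (n γ lam : ℝ) : ℝ :=
  deriv (fun V => Ff n γ lam (khat γ lam) V (1 + VpIs n γ lam)) (VpIs n γ lam)

/-- `G_C`: the partial derivative `∂G/∂C` at `P₈ = (V₊, 1+V₊)`, with `κ = κ̂`. -/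
def GCd (n γ lam : ℝ) : ℝ :=
  deriv (fun C => Gf n γ lam (khat γ lam) (VpIs n γ lam) C) (1 + VpIs n γ lam)

/-- `G_V`: the partial derivative `∂G/∂V` at `P₈ = (V₊, 1+V₊)`, with `κ = κ̂`. -/
def GVd (n γ lam : ℝ) : ℝ :=
  deriv (fun V => Gf n γ lam (khat γ lam) V (1 + VpIs n γ lam)) (VpIs n γ lam)

lemma GCd_eq (n γ lam : ℝ) :
    GCd n γ lam = 2*n*(1 + VpIs n γ lam)*(VpIs n γ lam - Vstar n γ lam (khat γ lam)) := by
  unfold GCd Gf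
  have h : HasDerivAt
      (fun C : ℝ => n*C^2*(VpIs n γ lam - Vstar n γ lam (khat γ lam))
        - VpIs n γ lam*(1+VpIs n γ lam)*(lam+VpIs n γ lam))
      ((n*((2:ℕ)*(1 + VpIs n γ lam)^(2-1)))*(VpIs n γ lam - Vstar n γ lam (khat γ lam)))
      (1 + VpIs n γ lam) :=
    (((hasDerivAt_pow 2 _).const_mul n).mul_const _).sub_const _
  rw [h.deriv]; push_cast; ring

lemma GVd_eq (n γ lam : ℝ) :
    GVd n γ lam = n*(1 + VpIs n γ lam)^2
      - ((1+VpIs n γ lam)*(lam+VpIs n γ lam) + VpIs n γ lam*(lam+VpIs n γ lam)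
        + VpIs n γ lam*(1+VpIs n γ lam)) := by
  unfold GVd Gf
  set v := VpIs n γ lam
  set C := 1 + v
  have h1 : HasDerivAt (fun V : ℝ => n*C^2*(V - Vstar n γ lam (khat γ lam))) (n*C^2*1) v :=
    ((hasDerivAt_id v).sub_const _).const_mul _
  have h2 : HasDerivAt (fun V : ℝ => V*(1+V)*(lam+V))
      ((1*(1+v) + v*1)*(lam+v) + v*(1+v)*1) v :=
    ((hasDerivAt_id v).mul ((hasDerivAt_id v).const_add 1)).mul ((hasDerivAt_id v).const_add lam)
  refine (h1.sub h2).deriv.trans ?_; ring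
lemma alphaP_khat (γ lam : ℝ) (hγ : (1:ℝ) < γ) : alphaP γ lam (khat γ lam) = 0 := by
  unfold alphaP khat
  have h1 : γ - 1 ≠ 0 := by linarith
  field_simp
  ring

lemma FCd_eq (n γ lam : ℝ) (hγ : (1:ℝ) < γ) :
    FCd n γ lam = 3*(1 + VpIs n γ lam)^2
      - (K1 n γ*(1+VpIs n γ lam)^2 - K2 n γ lam*(1+VpIs n γ lam) + K3 γ lam) := by
  unfold FCd
  set v := VpIs n γ lam
  have hfe : (fun C => Ff n γ lam (khat γ lam) v C)
      = fun C : ℝ => C^3 - C*(K1 n γ*(1+v)^2 - K2 n γ lam*(1+v) + K3 γ lam) := by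
    funext C
    rw [Ff, alphaP_khat γ lam hγ, zero_div]
    ring
  rw [hfe]
  have h : HasDerivAt
      (fun C : ℝ => C^3 - C*(K1 n γ*(1+v)^2 - K2 n γ lam*(1+v) + K3 γ lam))
      ((3:ℕ)*(1+v)^(3-1) - 1*(K1 n γ*(1+v)^2 - K2 n γ lam*(1+v) + K3 γ lam)) (1+v) :=
    (hasDerivAt_pow 3 _).sub ((hasDerivAt_id _).mul_const _)
  rw [h.deriv]; push_cast; ring

lemma FVd_eq (n γ lam : ℝ) (hγ : (1:ℝ) < γ) :
    FVd n γ lam = -(1 + VpIs n γ lam)*(2*K1 n γ*(1+VpIs n γ lam) - K2 n γ lam) := by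
  unfold FVd
  set v := VpIs n γ lam
  set C := 1 + v with hC
  have hfe : (fun V => Ff n γ lam (khat γ lam) V C)
      = fun V : ℝ => C*(C^2 - K1 n γ*(1+V)^2 + K2 n γ lam*(1+V) - K3 γ lam) := by
    funext V
    rw [Ff, alphaP_khat γ lam hγ, zero_div]
    ring
  rw [hfe]
  have h2 : HasDerivAt (fun V : ℝ => (1+V)^2) ((2:ℕ)*(1+v)^(2-1)*1) v :=
    ((hasDerivAt_id v).const_add 1).pow 2
  have h : HasDerivAt
      (fun V : ℝ => C*(C^2 - K1 n γ*(1+V)^2 + K2 n γ lam*(1+V) - K3 γ lam))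
      (C*(-(K1 n γ*((2:ℕ)*(1+v)^(2-1)*1)) + K2 n γ lam*1)) v := by
    exact ((((h2.const_mul (K1 n γ)).const_sub (C^2)).add
      (((hasDerivAt_id v).const_add 1).const_mul (K2 n γ lam))).sub_const (K3 γ lam)).const_mul C
  rw [h.deriv]; push_cast; ring

theorem stmt_14 (n γ lam : ℝ) (hn : n = 2 ∨ n = 3) (hγ : 1 < γ)
    (h0 : 0 < lam) (h1 : lam < 1) :
    let C8 := 1 + VpIs n γ lam
    GVd n γ lam + GCd n γ lam = (n-1)*C8*Real.sqrt (QIs n γ lam) ∧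
    0 < GVd n γ lam + GCd n γ lam ∧
    FVd n γ lam + FCd n γ lam = -((γ-1)/2)*(GVd n γ lam + GCd n γ lam) ∧
    FVd n γ lam + FCd n γ lam < 0 ∧
    FVd n γ lam < -FCd n γ lam ∧ -FCd n γ lam < 0 := by
  intro C8
  have hn1 : (1:ℝ) < n := by rcases hn with rfl | rfl <;> norm_num
  have hm : (0:ℝ) < n - 1 := by linarith
  have hm' : n - 1 ≠ 0 := ne_of_gt hm
  have hg : (0:ℝ) < γ - 1 := by linarith
  have hg' : γ - 1 ≠ 0 := ne_of_gt hg
  have hγ0 : γ ≠ 0 := by intro h; rw [h] at hγ; linarith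
  have hn0 : n ≠ 0 := by intro h; rw [h] at hn1; linarith
  set v := VpIs n γ lam with hv
  set s := Real.sqrt (QIs n γ lam) with hs
  have hQpos : 0 < QIs n γ lam := by
    unfold QIs
    have h2 : 0 < -2*((γ + 1)/((n-1)*(γ - 1)))*(lam - 1) := by
      have : 0 < (γ + 1)/((n-1)*(γ - 1)) := div_pos (by linarith) (mul_pos hm hg)
      nlinarith
    nlinarith [sq_nonneg (((γ - 3)/((n-1)*(γ - 1)))*(lam - 1))]
  have hs2 : s^2 = QIs n γ lam := Real.sq_sqrt hQpos.le
  have hspos : 0 < s := Real.sqrt_pos.2 hQpos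
  have hsv : s = 2*v - aIs n γ lam := by rw [hv]; unfold VpIs; ring
  have hQa : QIs n γ lam = (aIs n γ lam + 2)^2 + 4*(1-lam)/(n-1) := by
    unfold QIs aIs; field_simp; ring
  -- C8 > 0
  have hC8v : C8 = 1 + v := rfl
  have hC8pos : 0 < C8 := by
    rw [hC8v]
    have hx : 0 < 4*(1-lam)/(n-1) := div_pos (by linarith) hm
    have h3 : v = (aIs n γ lam + s)/2 := by rw [hv]; unfold VpIs; rw [← hs]
    nlinarith [hs2, hQa, mul_pos hspos hspos, sq_nonneg (s + aIs n γ lam + 2)]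
  -- polynomial relation for v
  have h3 : v = (aIs n γ lam + s)/2 := by rw [hv]; unfold VpIs; rw [← hs]
  have hq : v^2 = aIs n γ lam * v + aIs n γ lam + 1 + (1-lam)/(n-1) := by
    rw [h3]; linear_combination (1/4)*hs2 + (1/4)*hQa
  have haD : aIs n γ lam * ((n-1)*(γ-1)) = (γ-3)*(lam-1) - (n-1)*(γ-1) := by
    unfold aIs; field_simp
  have hdiv : (1-lam)/(n-1)*((n-1)*(γ-1)) = (1-lam)*(γ-1) := by field_simp
  have hP : (n-1)*(γ-1)*v^2 = ((γ-3)*(lam-1) - (n-1)*(γ-1))*v - 2*(lam-1) := by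
    linear_combination ((n-1)*(γ-1))*hq + (v+1)*haD + hdiv
  have hVs2 : Vstar n γ lam (khat γ lam) * (n*(γ-1)) = 2*(1-lam) := by
    unfold Vstar khat; field_simp; ring
  have hM1 : n*((n-1)*(γ-1)) ≠ 0 := by
    apply mul_ne_zero hn0; exact mul_ne_zero hm' hg'
  have hM2 : n*(γ-1) ≠ 0 := mul_ne_zero hn0 hg'
  have g1 : GVd n γ lam + GCd n γ lam = (n-1)*C8*s := by
    have key1 : (GVd n γ lam + GCd n γ lam) * (n*((n-1)*(γ-1)))
        = ((n-1)*((1+v)*s)) * (n*((n-1)*(γ-1))) := by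
      rw [GVd_eq, GCd_eq, hsv, ← hv]
      linear_combination (n^2-n)*hP + (n*(n-1)*(1+v))*haD - (2*n*(n-1)*(1+v))*hVs2
    have h' := mul_right_cancel₀ hM1 key1
    rw [hC8v]; linear_combination h'
  have g2 : FVd n γ lam + FCd n γ lam = -((γ-1)/2)*(GVd n γ lam + GCd n γ lam) := by
    have key2 : (FVd n γ lam + FCd n γ lam) * (n*(γ-1))
        = (-((γ-1)/2)*(GVd n γ lam + GCd n γ lam)) * (n*(γ-1)) := by
      rw [FVd_eq n γ lam hγ, FCd_eq n γ lam hγ, GVd_eq, GCd_eq, ← hv]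
      simp only [K1, K2, K3]
      linear_combination (-(n*(γ-1)*(1+v)))*hVs2
    exact mul_right_cancel₀ hM2 key2
  have gFC : FCd n γ lam = 2*(1+v)^2 := by
    rw [FCd_eq n γ lam hγ, ← hv]
    simp only [K1, K2, K3]
    linear_combination (-(1/2:ℝ))*hP
  have hCpos' : (0:ℝ) < 1 + v := hC8v ▸ hC8pos
  have pos1 : 0 < GVd n γ lam + GCd n γ lam := by
    rw [g1, hC8v]
    exact mul_pos (mul_pos hm hCpos') hspos
  have hFCpos : 0 < FCd n γ lam := by
    rw [gFC]; nlinarith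
  have hh : 0 < ((γ-1)/2) * (GVd n γ lam + GCd n γ lam) :=
    mul_pos (by linarith) pos1
  have neg2 : FVd n γ lam + FCd n γ lam < 0 := by
    rw [g2, neg_mul]; exact neg_lt_zero.mpr hh
  exact ⟨g1, pos1, g2, neg2, by linarith, neg_lt_zero.mpr hFCpos⟩
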